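/- In the two-point N-model M of the incompleteness construction for NA_{0,n} (n ≥ 2), for every formula ψ: a R_{□^{n-1}ψ} b if and only if a ⊮ ψ. -/

import Mathlib

inductive Formula : Type
  | bot : Formula
  | var : ℕ → Formula
  | neg : Formula → Formula
  | or : Formula → Formula → Formula
  | box : Formula → Formula
  deriving DecidableEq

namespace Formula

def imp (φ ψ : Formula) : Formula := .or (.neg φ) ψ

def and (φ ψ : Formula) : Formula := .neg (.or (.neg φ) (.neg ψ))

/-- □^n φ -/
def boxn : ℕ → Formula → Formula
  | 0, φ => φ
  | k+1, φ => .box (boxn k φ)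

/-- the set of subformulas -/
def sub : Formula → Finset Formula
  | .bot => {.bot}
  | .var p => {.var p}
  | .neg φ => insert (.neg φ) φ.sub
  | .or φ ψ => insert (.or φ ψ) (φ.sub ∪ ψ.sub)
  | .box φ => insert (.box φ) φ.sub

/-- ∼ρ -/
def negg : Formula → Formula
  | .neg φ => φ
  | φ => .neg φ

end Formula

def NSub (ψ : Formula) : Finset Formula := ψ.sub ∪ ψ.sub.image Formula.negg

/-- boolean evaluation treating boxed formulas and variables as atoms -/
def evalP (v : Formula → Bool) : Formula → Bool
  | .bot => false
  | .var p => v (.var p)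
  | .neg φ => !(evalP v φ)
  | .or φ ψ => evalP v φ || evalP v ψ
  | .box φ => v (.box φ)

/-- propositional tautologies in the modal language -/
def Tautology (φ : Formula) : Prop := ∀ v, evalP v φ = true

/-- Provability in NA_{m,n} (ros = false) and NRA_{m,n} (ros = true):
    propositional tautologies, the scheme □^n φ → □^m φ, modus ponens,
    necessitation, and (if ros) the rule Ros^□ : ¬□φ / ¬□□φ. -/
inductive Prov (m n : ℕ) (ros : Bool) : Formula → Prop
  | taut {φ} : Tautology φ → Prov m n ros φ
  | axA (φ) : Prov m n ros ((Formula.boxn n φ).imp (Formula.boxn m φ))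
  | mp {φ ψ} : Prov m n ros (φ.imp ψ) → Prov m n ros φ → Prov m n ros ψ
  | nec {φ} : Prov m n ros φ → Prov m n ros (.box φ)
  | ros {φ} : ros = true → Prov m n ros (.neg (.box φ)) →
      Prov m n ros (.neg (.box (.box φ)))

/-- An N-frame on world set W: a binary relation R_φ for each formula φ. -/
abbrev NFrame (W : Type) := Formula → W → W → Prop

structure NModel (W : Type) where
  Rel : NFrame W
  V : W → ℕ → Prop

/-- satisfaction in an N-model -/
def Sat {W : Type} (M : NModel W) : W → Formula → Prop
  | _, .bot => False
  | w, .var p => M.V w p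
  | w, .neg φ => ¬ Sat M w φ
  | w, .or φ ψ => Sat M w φ ∨ Sat M w ψ
  | w, .box φ => ∀ w', M.Rel φ w w' → Sat M w' φ

/-- x R_φ^k y : there is a φ-path of length k from x to y -/
def FPath {W : Type} (R : NFrame W) (φ : Formula) : ℕ → W → W → Prop
  | 0, x, y => x = y
  | k+1, x, y => ∃ w, R (Formula.boxn k φ) x w ∧ FPath R φ k w y

/-- (m,n)-accessibility for φ -/
def AccFor {W : Type} (R : NFrame W) (m n : ℕ) (φ : Formula) : Prop :=
  ∀ x y, FPath R φ m x y → FPath R φ n x y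

/-- Γ-(m,n)-accessibility -/
def SubAcc {W : Type} (R : NFrame W) (m n : ℕ) (Γ : Finset Formula) : Prop :=
  ∀ φ, Formula.boxn m φ ∈ Γ → AccFor R m n φ

/-- (m,n)-accessibility -/
def Accessible {W : Type} (R : NFrame W) (m n : ℕ) : Prop :=
  ∀ φ, AccFor R m n φ

def ValidM {W : Type} (M : NModel W) (ψ : Formula) : Prop := ∀ w, Sat M w ψ

def ValidF {W : Type} (R : NFrame W) (ψ : Formula) : Prop :=
  ∀ V : W → ℕ → Prop, ValidM ⟨R, V⟩ ψ

def Formula.size : Formula → ℕ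
  | .bot => 1
  | .var _ => 1
  | .neg φ => φ.size + 1
  | .or φ ψ => φ.size + ψ.size + 1
  | .box φ => φ.size + 1

/-- strip k boxes from the front of a formula, if possible -/
def strip : ℕ → Formula → Option Formula
  | 0, φ => some φ
  | k+1, .box φ => strip k φ
  | _+1, _ => none

theorem strip_size : ∀ {k : ℕ} {φ χ : Formula}, strip k φ = some χ → χ.size ≤ φ.size := by
  intro k
  induction k with
  | zero => intro φ χ h; simp [strip] at h; simp [h]
  | succ k ih =>
    intro φ χ h
    cases φ <;> simp [strip] at h
    exact le_trans (ih h) (by simp [Formula.size])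

/-- a R_{□^{n-1}ψ} b, as a function of ψ (here n1 = n - 1) -/
def dRec (n1 : ℕ) : Formula → Bool
  | .bot => true
  | .var _ => false
  | .neg φ => !(dRec n1 φ)
  | .or φ χ => dRec n1 φ && dRec n1 χ
  | .box φ =>
    match h : strip n1 φ with
    | some χ => dRec n1 χ
    | none => false
termination_by φ => φ.size
decreasing_by
  · simp [Formula.size]
  · simp [Formula.size]
  · simp [Formula.size]
  · have := strip_size h; simp [Formula.size]; omega

/-- whether a R_φ b -/
def aRb (n1 : ℕ) (φ : Formula) : Bool :=
  match strip n1 φ with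
  | some χ => dRec n1 χ
  | none => false

/-- the two-point model on Bool, with a = false and b = true -/
def Rel8 (n : ℕ) : NFrame Bool :=
  fun φ x y =>
    if x = true then True else if y = true then aRb (n-1) φ = true else False

def M8 (n : ℕ) : NModel Bool := ⟨Rel8 n, fun _ _ => True⟩


theorem strip_boxn : ∀ (k : ℕ) (χ : Formula), strip k (Formula.boxn k χ) = some χ := by
  intro k
  induction k with
  | zero => intro χ; rfl
  | succ k ih => intro χ; simpa [Formula.boxn, strip] using ih χ

theorem strip_eq_boxn : ∀ {k : ℕ} {φ χ : Formula}, strip k φ = some χ → φ = Formula.boxn k χ := by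
  intro k
  induction k with
  | zero => intro φ χ h; simp [strip] at h; simp [h, Formula.boxn]
  | succ k ih =>
    intro φ χ h
    cases φ <;> simp [strip] at h
    simp [Formula.boxn, ih h]

theorem dRec_box (n1 : ℕ) (φ : Formula) : dRec n1 (.box φ) =
    match strip n1 φ with
    | some χ => dRec n1 χ
    | none => false := by
  rw [dRec]
  rcases h : strip n1 φ with _ | χ <;> simp [h]

theorem dRec_neg (n1 : ℕ) (φ : Formula) : dRec n1 (.neg φ) = !(dRec n1 φ) := by
  rw [dRec]

theorem dRec_or (n1 : ℕ) (φ χ : Formula) : dRec n1 (.or φ χ) = (dRec n1 φ && dRec n1 χ) := by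
  rw [dRec]

theorem dRec_bot (n1 : ℕ) : dRec n1 .bot = true := by rw [dRec]

theorem dRec_var (n1 p : ℕ) : dRec n1 (.var p) = false := by rw [dRec]

theorem rel8_true (n : ℕ) (φ : Formula) (w : Bool) : Rel8 n φ true w := by
  simp [Rel8]

theorem sat_true_box {n : ℕ} {θ : Formula} (h : Sat (M8 n) true (.box θ)) :
    Sat (M8 n) false θ ∧ Sat (M8 n) true θ :=
  ⟨h false (rel8_true n θ false), h true (rel8_true n θ true)⟩

theorem sat_boxn {n : ℕ} : ∀ (k : ℕ), 1 ≤ k → ∀ {χ : Formula},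
    Sat (M8 n) true (Formula.boxn k χ) → Sat (M8 n) false χ := by
  intro k
  induction k with
  | zero => omega
  | succ k ih =>
    intro _ χ h
    rcases Nat.eq_zero_or_pos k with hk | hk
    · subst hk
      exact (sat_true_box h).1
    · exact ih hk (sat_true_box h).2

theorem sat_false_box {n : ℕ} {φ : Formula} :
    Sat (M8 n) false (.box φ) ↔ (aRb (n-1) φ = true → Sat (M8 n) true φ) := by
  constructor
  · intro h ha
    exact h true (by simp [M8, Rel8, ha])
  · intro h w hw
    cases w with
    | false => exact absurd hw (by simp [M8, Rel8])
    | true => exact h (by simpa [Rel8, M8] using hw)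

theorem dRec_iff (n : ℕ) (hn : 2 ≤ n) :
    ∀ (N : ℕ) (ψ : Formula), ψ.size ≤ N →
      (dRec (n-1) ψ = true ↔ ¬ Sat (M8 n) false ψ) := by
  intro N
  induction N with
  | zero => intro ψ h; cases ψ <;> simp [Formula.size] at h
  | succ N ih =>
    intro ψ hs
    cases ψ with
    | bot => simp [dRec_bot, Sat]
    | var p => simp [dRec_var, Sat, M8]
    | neg φ =>
      have := ih φ (by simp [Formula.size] at hs; omega)
      rw [dRec_neg]
      simp only [Sat, not_not, Bool.not_eq_true', ← Bool.not_eq_true, this, not_not]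
    | or φ χ =>
      have h1 := ih φ (by simp [Formula.size] at hs; omega)
      have h2 := ih χ (by simp [Formula.size] at hs; omega)
      rw [dRec_or]
      simp [Sat, h1, h2, not_or]
    | box φ =>
      have hφ : φ.size ≤ N := by simp [Formula.size] at hs; omega
      rw [dRec_box, sat_false_box]
      rcases hstrip : strip (n-1) φ with _ | χ
      · simp [aRb, hstrip]
      · have hχ : χ.size ≤ N := le_trans (strip_size hstrip) hφ
        have ihχ := ih χ hχ
        simp only [aRb, hstrip]
        constructor
        · intro hd
          intro hcon
          have hφeq : φ = Formula.boxn (n-1) χ := strip_eq_boxn hstrip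
          have : Sat (M8 n) false χ := sat_boxn (n-1) (by omega) (hφeq ▸ hcon hd)
          exact (ihχ.mp hd) this
        · intro h
          by_contra hd
          have hd' : dRec (n-1) χ = false := by
            cases hdd : dRec (n-1) χ
            · rfl
            · exact absurd hdd hd
          have : Sat (M8 n) false χ := by
            by_contra hc
            exact (by simp [ihχ.mpr hc] at hd' : False)
          exact h (fun hc => absurd hc (by simp [hd']))

theorem stmt8 (n : ℕ) (hn : 2 ≤ n) (ψ : Formula) :
    Rel8 n (Formula.boxn (n - 1) ψ) false true ↔ ¬ Sat (M8 n) false ψ := by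
  have h := dRec_iff n hn ψ.size ψ le_rfl
  simp [Rel8, aRb, strip_boxn, h]
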